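/- Let K be a field and let Δ be a finite nonempty set of (pairwise distinct) normalized discrete valuations v : K^× ↠ ℤ on K, with valuation rings O_v = {x ∈ K : v(x) ≥ 0}. Let R = ⋂_{v ∈ Δ} O_v and J(R) = {x ∈ K : v(x) ≥ 1 for all v ∈ Δ} (the Jacobson radical of R), and set R̃ = {x ∈ K : there is no y ∈ J(R) with x·y = 1}. Then: (i) R̃ = ⋃_{v ∈ Δ} O_v; and (ii) if J(R) is diophantine over K, then the complement K \ R̃ is diophantine over K (so R̃ is defined by a universal formula in K). -/
import Mathlib


/-- A set `A ⊆ K^m` is diophantine over a field `K`: there are `n ∈ ℕ` and a polynomial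
`g ∈ K[x₁,…,x_m,y₁,…,y_n]` such that `a ∈ A` iff `g(a,r) = 0` for some `r ∈ K^n`. -/
def IsDiophantine {K : Type*} [Field K] {m : ℕ} (A : Set (Fin m → K)) : Prop :=
  ∃ (n : ℕ) (g : MvPolynomial (Fin m ⊕ Fin n) K),
    ∀ a : Fin m → K, a ∈ A ↔ ∃ r : Fin n → K, MvPolynomial.eval (Sum.elim a r) g = 0

/-- A normalized discrete valuation on a field `K`, encoded multiplicatively as a valuation
with values in `ℤₘ₀ = WithZero (Multiplicative ℤ)` which is surjective (i.e. `v : K^× ↠ ℤ` is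
onto).  For `x ≠ 0`, the additive valuation of `x` is `n ∈ ℤ` iff `val x = ofAdd (-n)`; in
particular `v(x) ≥ n` iff `val x ≤ ofAdd (-n)`. -/
structure NormDiscValuation (K : Type*) [Field K] where
  val : Valuation K (WithZero (Multiplicative ℤ))
  surjective : Function.Surjective val

/-- `v(x) ≥ 1`, i.e. `x` lies in the maximal ideal of the valuation ring of `v`. -/
def NormDiscValuation.InMaxIdeal {K : Type*} [Field K] (v : NormDiscValuation K) (x : K) :
    Prop :=
  v.val x ≤ ((Multiplicative.ofAdd (-1 : ℤ) : Multiplicative ℤ) : WithZero (Multiplicative ℤ))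

private lemma auxInv1 (a : WithZero (Multiplicative ℤ)) (ha : a ≠ 0) (h : 1 < a) :
    a⁻¹ ≤ ((Multiplicative.ofAdd (-1:ℤ) : Multiplicative ℤ) : WithZero (Multiplicative ℤ)) := by
  obtain ⟨u, rfl⟩ := WithZero.ne_zero_iff_exists.mp ha
  rw [← WithZero.coe_inv, WithZero.coe_le_coe]
  rw [← WithZero.coe_one, WithZero.coe_lt_coe] at h
  rw [← ofAdd_toAdd u] at h ⊢
  rw [← ofAdd_neg, Multiplicative.ofAdd_le]
  rw [show (1 : Multiplicative ℤ) = Multiplicative.ofAdd (0:ℤ) from rfl,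
    Multiplicative.ofAdd_lt] at h
  omega

private lemma auxInv2 (a : WithZero (Multiplicative ℤ)) (ha : a ≠ 0)
    (h : a ≤ ((Multiplicative.ofAdd (-1:ℤ) : Multiplicative ℤ) : WithZero (Multiplicative ℤ))) :
    1 < a⁻¹ := by
  obtain ⟨u, rfl⟩ := WithZero.ne_zero_iff_exists.mp ha
  rw [← WithZero.coe_inv, ← WithZero.coe_one, WithZero.coe_lt_coe]
  rw [WithZero.coe_le_coe] at h
  rw [← ofAdd_toAdd u] at h ⊢
  rw [Multiplicative.ofAdd_le] at h
  rw [← ofAdd_neg,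
    show (1 : Multiplicative ℤ) = Multiplicative.ofAdd (0:ℤ) from rfl, Multiplicative.ofAdd_lt]
  omega

/-- **Lemma.** Let `K` be a field and `Δ` a finite nonempty set of normalized discrete
valuations on `K`, with valuation rings `O_v = {x : v(x) ≥ 0}`.  Let `R = ⋂_{v ∈ Δ} O_v`,
`J(R) = {x : v(x) ≥ 1 for all v ∈ Δ}` its Jacobson radical, and
`R̃ = {x ∈ K : there is no y ∈ J(R) with x·y = 1}`.  Then (i) `R̃ = ⋃_{v ∈ Δ} O_v`, and
(ii) if `J(R)` is diophantine over `K` then `K \ R̃ = {x : ∃ y ∈ J(R), x·y = 1}` is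
diophantine over `K` (so `R̃` is defined by a universal formula in `K`). -/
theorem tilde_ring_eq_union_and_compl_isDiophantine (K : Type*) [Field K]
    (Δ : Set (NormDiscValuation K)) (hfin : Δ.Finite) (hne : Δ.Nonempty) :
    ({x : K | ¬∃ y : K, (∀ v ∈ Δ, v.InMaxIdeal y) ∧ x * y = 1}
        = ⋃ v ∈ Δ, {x : K | v.val x ≤ 1}) ∧
    (IsDiophantine {f : Fin 1 → K | ∀ v ∈ Δ, v.InMaxIdeal (f 0)} →
      IsDiophantine {f : Fin 1 → K |
        ∃ y : K, (∀ v ∈ Δ, v.InMaxIdeal y) ∧ f 0 * y = 1}) := by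
  constructor
  · ext x
    simp only [Set.mem_setOf_eq, Set.mem_iUnion, exists_prop]
    rw [not_iff_comm]
    push_neg
    constructor
    · intro h
      obtain ⟨v0, hv0⟩ := hne
      have hx : x ≠ 0 := by
        intro h0
        have := h v0 hv0
        rw [h0, map_zero] at this
        exact absurd this (by simp)
      refine ⟨x⁻¹, fun v hv => ?_, mul_inv_cancel₀ hx⟩
      have hxv : v.val x ≠ 0 := (Valuation.ne_zero_iff _).mpr hx
      have := auxInv1 (v.val x) hxv (h v hv)
      rwa [NormDiscValuation.InMaxIdeal, map_inv₀]
    · rintro ⟨y, hy, hxy⟩ v hv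
      have hy0 : y ≠ 0 := by rintro rfl; simp at hxy
      have hyv : v.val y ≠ 0 := (Valuation.ne_zero_iff _).mpr hy0
      have := auxInv2 (v.val y) hyv (hy v hv)
      have hxv : v.val x = (v.val y)⁻¹ := by
        have h1 : v.val x * v.val y = 1 := by rw [← map_mul, hxy, map_one]
        exact eq_inv_of_mul_eq_one_left h1
      rwa [hxv]
  · rintro ⟨n, g, hg⟩
    obtain ⟨v, hvΔ⟩ := hne
    obtain ⟨c, hc⟩ := v.surjective
      ((Multiplicative.ofAdd (-1:ℤ) : Multiplicative ℤ) : WithZero (Multiplicative ℤ))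
    have hcsq : ∀ z : K, z ^ 2 ≠ c := by
      intro z hz
      have h2 : (v.val z) ^ 2
          = ((Multiplicative.ofAdd (-1:ℤ) : Multiplicative ℤ) : WithZero (Multiplicative ℤ)) := by
        rw [← map_pow, hz, hc]
      have hz0 : v.val z ≠ 0 := by
        intro h0; rw [h0] at h2; simp at h2
      obtain ⟨u, hu⟩ := WithZero.ne_zero_iff_exists.mp hz0
      rw [← hu, ← WithZero.coe_pow, WithZero.coe_inj, ← ofAdd_toAdd u,
        ← ofAdd_nsmul] at h2
      have := Multiplicative.ofAdd.injective h2
      rw [nsmul_eq_mul] at this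
      push_cast at this
      omega
    have hkey : ∀ u w : K, u ^ 2 = c * w ^ 2 → u = 0 ∧ w = 0 := by
      intro u w h
      rcases eq_or_ne w 0 with rfl | hw
      · constructor
        · have : u ^ 2 = 0 := by rw [h]; ring
          exact pow_eq_zero_iff (by norm_num) |>.mp this
        · rfl
      · exfalso
        exact hcsq (u / w) (by field_simp; linear_combination h)
    set σ : (Fin 1 ⊕ Fin n) → (Fin 1 ⊕ Fin (n+1)) :=
      Sum.elim (fun _ => Sum.inr 0) (fun i => Sum.inr i.succ) with hσ
    refine ⟨n + 1, (MvPolynomial.rename σ g) ^ 2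
        - MvPolynomial.C c
          * (MvPolynomial.X (Sum.inl 0) * MvPolynomial.X (Sum.inr 0) - 1) ^ 2, ?_⟩
    intro a
    have heval : ∀ (r : Fin (n+1) → K),
        MvPolynomial.eval (Sum.elim a r) (MvPolynomial.rename σ g)
          = MvPolynomial.eval
              (Sum.elim (fun _ : Fin 1 => r 0) (fun i : Fin n => r i.succ)) g := by
      intro r
      have hfun : Sum.elim a r ∘ σ
          = Sum.elim (fun _ : Fin 1 => r 0) (fun i : Fin n => r i.succ) := by
        funext s; cases s <;> rfl
      rw [MvPolynomial.eval_rename, hfun]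
    simp only [Set.mem_setOf_eq]
    constructor
    · rintro ⟨y, hy, hxy⟩
      obtain ⟨r, hr⟩ := (hg (fun _ => y)).mp (fun v hv => hy v hv)
      refine ⟨Fin.cons y r, ?_⟩
      rw [map_sub, map_pow, heval]
      have h1 : (Sum.elim (fun _ : Fin 1 => (Fin.cons y r : Fin (n+1) → K) 0)
          (fun i : Fin n => (Fin.cons y r : Fin (n+1) → K) i.succ))
          = Sum.elim (fun _ => y) r := by
        funext s; cases s with
        | inl j => rfl
        | inr i => simp [Fin.cons_succ]
      rw [h1, hr]
      simp [hxy]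
    · rintro ⟨r, hr⟩
      rw [map_sub, map_pow, heval] at hr
      have hr' : (MvPolynomial.eval
            (Sum.elim (fun _ : Fin 1 => r 0) (fun i : Fin n => r i.succ)) g) ^ 2
          = c * (a 0 * r 0 - 1) ^ 2 := by
        have := sub_eq_zero.mp hr
        simpa using this
      obtain ⟨h1, h2⟩ := hkey _ _ hr'
      refine ⟨r 0, ?_, sub_eq_zero.mp h2⟩
      have := (hg (fun _ => r 0)).mpr ⟨fun i => r i.succ, h1⟩
      exact fun v hv => this v hv
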